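/- (Conic Hermite–Kakeya–Obreschkoff) Let f, g ∈ ℝ[z₁,…,zₙ] and K ⊂ ℝⁿ a proper cone. Then λf + μg is K-stable or the zero polynomial for all λ, μ ∈ ℝ if and only if f + i·g is K-stable, or g + i·f is K-stable, or f ≡ g ≡ 0. -/

import Mathlib

open MvPolynomial

section HKOAux

open Complex Polynomial Pointwise

lemma norm_multiset_prod' (s : Multiset ℂ) : ‖s.prod‖ = (s.map (fun z => ‖z‖)).prod := by
  induction s using Multiset.induction with
  | empty => simp
  | cons a s ih => simp [norm_mul, ih]

lemma norm_I_sub_conj_le {r : ℂ} (hr : r.im ≤ 0) :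
    ‖Complex.I - (starRingEnd ℂ) r‖ ≤ ‖Complex.I - r‖ := by
  have h1 : Complex.normSq (Complex.I - (starRingEnd ℂ) r) ≤ Complex.normSq (Complex.I - r) := by
    simp only [Complex.normSq_apply, Complex.sub_re, Complex.sub_im, Complex.I_re, Complex.I_im,
      Complex.conj_re, Complex.conj_im]
    nlinarith
  calc ‖Complex.I - (starRingEnd ℂ) r‖
      = Real.sqrt (Complex.normSq (Complex.I - (starRingEnd ℂ) r)) := by
        rw [Complex.norm_def]
    _ ≤ Real.sqrt (Complex.normSq (Complex.I - r)) := Real.sqrt_le_sqrt h1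
    _ = ‖Complex.I - r‖ := by rw [Complex.norm_def]

lemma univ_lemmaB (P : Polynomial ℂ) (hP : ∀ t : ℂ, 0 < t.im → Polynomial.eval t P ≠ 0) :
    ‖Polynomial.eval Complex.I (P.map (starRingEnd ℂ))‖ ≤ ‖Polynomial.eval Complex.I P‖ := by
  rcases eq_or_ne P 0 with h0 | h0
  · simp [h0]
  have hsplit : P.Splits := IsAlgClosed.splits P
  have hfac := Polynomial.Splits.eq_prod_roots hsplit
  have hroots : ∀ r ∈ P.roots, r.im ≤ 0 := by
    intro r hr
    by_contra h
    exact hP r (lt_of_not_ge h) ((Polynomial.mem_roots h0).1 hr)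
  have hevP : ‖Polynomial.eval Complex.I P‖
      = ‖P.leadingCoeff‖ * (P.roots.map (fun r => ‖Complex.I - r‖)).prod := by
    conv_lhs => rw [hfac]
    rw [Polynomial.eval_mul, Polynomial.eval_C, norm_mul, Polynomial.eval_multiset_prod,
      norm_multiset_prod', Multiset.map_map, Multiset.map_map]
    refine congrArg _ (congrArg Multiset.prod (Multiset.map_congr rfl (fun r _ => ?_)))
    simp [Function.comp]
  have hevQ : ‖Polynomial.eval Complex.I (P.map (starRingEnd ℂ))‖
      = ‖P.leadingCoeff‖ * (P.roots.map (fun r => ‖Complex.I - (starRingEnd ℂ) r‖)).prod := by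
    conv_lhs => rw [hfac]
    rw [Polynomial.map_mul, Polynomial.map_C, Polynomial.eval_mul, Polynomial.eval_C, norm_mul,
      ← Polynomial.coe_mapRingHom, map_multiset_prod, Polynomial.eval_multiset_prod,
      norm_multiset_prod', Multiset.map_map, Multiset.map_map, Multiset.map_map]
    refine congrArg₂ _ (by simp) (congrArg Multiset.prod (Multiset.map_congr rfl (fun r _ => ?_)))
    simp [Function.comp]
  rw [hevP, hevQ]
  apply mul_le_mul_of_nonneg_left _ (norm_nonneg _)
  exact Multiset.prod_map_le_prod_map₀ _ _ (fun r _ => norm_nonneg _)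
    (fun r hr => norm_I_sub_conj_le (hroots r hr))

noncomputable def lineP {n : ℕ} (x y : Fin n → ℝ) (F : MvPolynomial (Fin n) ℂ) : Polynomial ℂ :=
  MvPolynomial.eval₂ Polynomial.C
    (fun j => Polynomial.C (x j : ℂ) + Polynomial.X * Polynomial.C (y j : ℂ)) F

lemma lineP_eval {n : ℕ} (x y : Fin n → ℝ) (F : MvPolynomial (Fin n) ℂ) (t : ℂ) :
    (lineP x y F).eval t = MvPolynomial.eval (fun j => (x j : ℂ) + t * (y j : ℂ)) F := by
  have h := MvPolynomial.eval₂_comp_left (Polynomial.evalRingHom t) Polynomial.C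
      (fun j => Polynomial.C (x j : ℂ) + Polynomial.X * Polynomial.C (y j : ℂ)) F
  have h1 : (Polynomial.evalRingHom t).comp (Polynomial.C : ℂ →+* Polynomial ℂ) = RingHom.id ℂ :=
    RingHom.ext fun a => by simp
  rw [h1, MvPolynomial.eval₂_id] at h
  have h2 : (⇑(Polynomial.evalRingHom t) ∘ fun j =>
      Polynomial.C (x j : ℂ) + Polynomial.X * Polynomial.C (y j : ℂ))
      = fun j => (x j : ℂ) + t * (y j : ℂ) := by
    funext j
    simp only [Function.comp_apply, Polynomial.coe_evalRingHom, Polynomial.eval_add,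
      Polynomial.eval_mul, Polynomial.eval_C, Polynomial.eval_X]
  rw [h2] at h
  rw [lineP]
  exact h

lemma lineP_map_conj {n : ℕ} (x y : Fin n → ℝ) (F : MvPolynomial (Fin n) ℂ) :
    (lineP x y F).map (starRingEnd ℂ) = lineP x y (MvPolynomial.map (starRingEnd ℂ) F) := by
  have h := MvPolynomial.eval₂_comp_left (Polynomial.mapRingHom (starRingEnd ℂ)) Polynomial.C
      (fun j => Polynomial.C (x j : ℂ) + Polynomial.X * Polynomial.C (y j : ℂ)) F
  have h1 : (Polynomial.mapRingHom (starRingEnd ℂ)).comp (Polynomial.C : ℂ →+* Polynomial ℂ)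
      = (Polynomial.C : ℂ →+* Polynomial ℂ).comp (starRingEnd ℂ) := RingHom.ext fun a => by simp
  rw [h1] at h
  have h2 : (⇑(Polynomial.mapRingHom (starRingEnd ℂ)) ∘ fun j =>
      Polynomial.C (x j : ℂ) + Polynomial.X * Polynomial.C (y j : ℂ))
      = fun j => Polynomial.C (x j : ℂ) + Polynomial.X * Polynomial.C (y j : ℂ) := by
    funext j; simp [Complex.conj_ofReal]
  rw [h2] at h
  rw [lineP, lineP, MvPolynomial.eval₂_map]
  exact h

lemma smul_mem_interior' {n : ℕ} {K : Set (Fin n → ℝ)}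
    (hKcone : ∀ (c : ℝ), 0 ≤ c → ∀ x ∈ K, c • x ∈ K) {c : ℝ} (hc : 0 < c)
    {y : Fin n → ℝ} (hy : y ∈ interior K) : c • y ∈ interior K := by
  have hsub : c • interior K ⊆ K := by
    rintro _ ⟨u, hu, rfl⟩
    exact hKcone c hc.le u (interior_subset hu)
  have hopen : IsOpen (c • interior K) := isOpen_interior.smul₀ hc.ne'
  exact interior_maximal hsub hopen (Set.smul_mem_smul_set hy)

lemma lemmaC {n : ℕ} {K : Set (Fin n → ℝ)}
    (hKcone : ∀ (c : ℝ), 0 ≤ c → ∀ x ∈ K, c • x ∈ K)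
    (F : MvPolynomial (Fin n) ℂ)
    (hF : ∀ z : Fin n → ℂ, (fun j => (z j).im) ∈ interior K → MvPolynomial.eval z F ≠ 0)
    {z₀ : Fin n → ℂ} (hz₀ : (fun j => (z₀ j).im) ∈ interior K) :
    ‖MvPolynomial.eval z₀ (MvPolynomial.map (starRingEnd ℂ) F)‖ ≤ ‖MvPolynomial.eval z₀ F‖ := by
  set x : Fin n → ℝ := fun j => (z₀ j).re with hx
  set y : Fin n → ℝ := fun j => (z₀ j).im with hy
  have hz : (fun j => (x j : ℂ) + Complex.I * (y j : ℂ)) = z₀ := by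
    funext j
    rw [mul_comm]
    exact Complex.re_add_im (z₀ j)
  have hstab : ∀ t : ℂ, 0 < t.im → (lineP x y F).eval t ≠ 0 := by
    intro t ht
    rw [lineP_eval]
    apply hF
    have him : (fun j => ((x j : ℂ) + t * (y j : ℂ)).im) = t.im • y := by
      funext j
      simp [Complex.add_im, Complex.mul_im, Complex.ofReal_re, Complex.ofReal_im]
    rw [him]
    exact smul_mem_interior' hKcone ht hz₀
  have h := univ_lemmaB (lineP x y F) hstab
  rw [lineP_map_conj, lineP_eval, lineP_eval, hz] at h
  exact h

lemma mv_eq_zero_of_open {n : ℕ} (p : MvPolynomial (Fin n) ℂ) {U : Set (Fin n → ℂ)}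
    (hU : IsOpen U) (hne : U.Nonempty) (hz : ∀ z ∈ U, MvPolynomial.eval z p = 0) : p = 0 := by
  obtain ⟨z₀, hz₀⟩ := hne
  have han : AnalyticOnNhd ℂ (fun z : Fin n → ℂ => MvPolynomial.eval z p) Set.univ :=
    AnalyticOnNhd.eval_mvPolynomial (𝕜 := ℂ) p
  have h0 : (fun z : Fin n → ℂ => MvPolynomial.eval z p) =ᶠ[nhds z₀] 0 :=
    Filter.eventuallyEq_of_mem (hU.mem_nhds hz₀) (fun z hzU => hz z hzU)
  have hEq := han.eqOn_zero_of_preconnected_of_eventuallyEq_zero isPreconnected_univ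
    (Set.mem_univ z₀) h0
  exact MvPolynomial.funext (fun z => by simpa using hEq (Set.mem_univ z))

lemma conj_comp_algebraMap :
    (starRingEnd ℂ).comp (algebraMap ℝ ℂ) = algebraMap ℝ ℂ :=
  RingHom.ext fun r => Complex.conj_ofReal r

lemma map_conj_of_real {n : ℕ} (f : MvPolynomial (Fin n) ℝ) :
    MvPolynomial.map (starRingEnd ℂ) (f.map (algebraMap ℝ ℂ)) = f.map (algebraMap ℝ ℂ) := by
  rw [MvPolynomial.map_map, conj_comp_algebraMap]

lemma eval_comb {n : ℕ} (f g : MvPolynomial (Fin n) ℝ) (lam mu : ℝ) (z : Fin n → ℂ) :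
    MvPolynomial.eval z ((lam • f + mu • g).map (algebraMap ℝ ℂ))
      = (lam : ℂ) * MvPolynomial.eval z (f.map (algebraMap ℝ ℂ))
        + (mu : ℂ) * MvPolynomial.eval z (g.map (algebraMap ℝ ℂ)) := by
  rw [MvPolynomial.smul_eq_C_mul, MvPolynomial.smul_eq_C_mul]
  simp [Complex.coe_algebraMap]

section Tube

variable {n : ℕ} {K : Set (Fin n → ℝ)}

lemma tube_isOpen : IsOpen {z : Fin n → ℂ | (fun j => (z j).im) ∈ interior K} := by
  have hc : Continuous (fun z : Fin n → ℂ => fun j => (z j).im) :=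
    continuous_pi (fun j => Complex.continuous_im.comp (continuous_apply j))
  exact isOpen_interior.preimage hc

lemma tube_convex (hKconv : Convex ℝ K) :
    Convex ℝ {z : Fin n → ℂ | (fun j => (z j).im) ∈ interior K} := by
  intro z hz w hw a b ha hb hab
  have him : (fun j => ((a • z + b • w) j).im)
      = a • (fun j => (z j).im) + b • (fun j => (w j).im) := by
    funext j
    simp [Complex.add_im, Complex.real_smul, Complex.mul_im]
  show (fun j => ((a • z + b • w) j).im) ∈ interior K
  rw [him]
  exact hKconv.interior hz hw ha hb hab

end Tube

lemma lemmaM {n : ℕ} {K : Set (Fin n → ℝ)}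
    (hKconv : Convex ℝ K)
    (hKcone : ∀ (c : ℝ), 0 ≤ c → ∀ x ∈ K, c • x ∈ K)
    (f g : MvPolynomial (Fin n) ℝ)
    (hF : ∀ z : Fin n → ℂ, (fun j => (z j).im) ∈ interior K →
      MvPolynomial.eval z (f.map (algebraMap ℝ ℂ)
        + MvPolynomial.C Complex.I * g.map (algebraMap ℝ ℂ)) ≠ 0)
    (lam mu : ℝ) :
    (∀ z : Fin n → ℂ, (fun j => (z j).im) ∈ interior K →
      MvPolynomial.eval z ((lam • f + mu • g).map (algebraMap ℝ ℂ)) ≠ 0)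
      ∨ lam • f + mu • g = 0 := by
  by_cases hzero : lam • f + mu • g = 0
  · exact Or.inr hzero
  left
  intro z₀ hz₀ h0
  -- notation
  set fC := f.map (algebraMap ℝ ℂ) with hfC
  set gC := g.map (algebraMap ℝ ℂ) with hgC
  set F := fC + MvPolynomial.C Complex.I * gC with hFdef
  set G := MvPolynomial.map (starRingEnd ℂ) F with hGdef
  have hGeq : G = fC - MvPolynomial.C Complex.I * gC := by
    rw [hGdef, hFdef, map_add, map_mul, MvPolynomial.map_C, map_conj_of_real,
      map_conj_of_real, Complex.conj_I, map_neg, neg_mul, ← sub_eq_add_neg]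
  set T : Set (Fin n → ℂ) := {z | (fun j => (z j).im) ∈ interior K} with hT
  have hTopen : IsOpen T := tube_isOpen
  have hTpre : IsPreconnected T := (tube_convex hKconv).isPreconnected
  have hz₀T : z₀ ∈ T := hz₀
  have hFne : ∀ z ∈ T, MvPolynomial.eval z F ≠ 0 := fun z hz => hF z hz
  -- eval facts
  have hevF : ∀ z : Fin n → ℂ, MvPolynomial.eval z F
      = MvPolynomial.eval z fC + Complex.I * MvPolynomial.eval z gC := by
    intro z; simp [hFdef]
  have hevG : ∀ z : Fin n → ℂ, MvPolynomial.eval z G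
      = MvPolynomial.eval z fC - Complex.I * MvPolynomial.eval z gC := by
    intro z; rw [hGeq]; simp
  -- the scalars
  set c₁ : ℂ := (lam : ℂ) - Complex.I * mu with hc₁
  set c₂ : ℂ := (lam : ℂ) + Complex.I * mu with hc₂
  have hlm : ¬(lam = 0 ∧ mu = 0) := by
    rintro ⟨rfl, rfl⟩
    simp at hzero
  have hc₁ne : c₁ ≠ 0 := by
    intro h
    apply hlm
    have hre := congrArg Complex.re h
    have him := congrArg Complex.im h
    simp [hc₁] at hre him
    exact ⟨hre, him⟩
  have hnorm12 : ‖c₁‖ = ‖c₂‖ := by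
    rw [Complex.norm_def, Complex.norm_def]
    congr 1
    simp [Complex.normSq_apply, hc₁, hc₂]
  -- identity
  have hiden : ∀ z : Fin n → ℂ,
      c₁ * MvPolynomial.eval z F + c₂ * MvPolynomial.eval z G
        = 2 * MvPolynomial.eval z ((lam • f + mu • g).map (algebraMap ℝ ℂ)) := by
    intro z
    rw [hevF, hevG, eval_comb]
    simp only [hc₁, hc₂]
    linear_combination (-2 * (mu : ℂ) * MvPolynomial.eval z gC) * Complex.I_sq
  -- norms equal at z₀
  have h0' : c₁ * MvPolynomial.eval z₀ F = - (c₂ * MvPolynomial.eval z₀ G) := by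
    have := hiden z₀
    rw [h0] at this
    linear_combination this
  have hnormeq : ‖MvPolynomial.eval z₀ G‖ = ‖MvPolynomial.eval z₀ F‖ := by
    have h1 : ‖c₁‖ * ‖MvPolynomial.eval z₀ F‖ = ‖c₂‖ * ‖MvPolynomial.eval z₀ G‖ := by
      rw [← norm_mul, ← norm_mul, h0', norm_neg]
    rw [hnorm12] at h1
    have hc₂ne : ‖c₂‖ ≠ 0 := by rw [← hnorm12]; exact norm_ne_zero_iff.2 hc₁ne
    exact (mul_left_cancel₀ hc₂ne h1).symm
  -- the quotient function
  set φ : (Fin n → ℂ) → ℂ := fun z => MvPolynomial.eval z G / MvPolynomial.eval z F with hφ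
  have hφle : ∀ z ∈ T, ‖φ z‖ ≤ 1 := by
    intro z hz
    rw [hφ, norm_div]
    rw [div_le_one (norm_pos_iff.2 (hFne z hz))]
    exact lemmaC hKcone F (fun w hw => hF w hw) hz
  have hφz₀ : ‖φ z₀‖ = 1 := by
    rw [hφ, norm_div, hnormeq, div_self (norm_ne_zero_iff.2 (hFne z₀ hz₀T))]
  have hdG : AnalyticOnNhd ℂ (fun z : Fin n → ℂ => MvPolynomial.eval z G) T :=
    (AnalyticOnNhd.eval_mvPolynomial (𝕜 := ℂ) G).mono (Set.subset_univ T)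
  have hdF2 : AnalyticOnNhd ℂ (fun z : Fin n → ℂ => MvPolynomial.eval z F) T :=
    (AnalyticOnNhd.eval_mvPolynomial (𝕜 := ℂ) F).mono (Set.subset_univ T)
  have hd : DifferentiableOn ℂ φ T := (hdG.div hdF2 hFne).differentiableOn
  have hmax : IsMaxOn (norm ∘ φ) T z₀ := by
    intro z hz
    simp only [Function.comp_apply, Set.mem_setOf_eq]
    rw [hφz₀]
    exact hφle z hz
  have hconst := Complex.eqOn_of_isPreconnected_of_isMaxOn_norm hTpre hTopen hd hz₀T hmax
  set c : ℂ := φ z₀ with hc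
  have hGc : ∀ z ∈ T, MvPolynomial.eval z G = c * MvPolynomial.eval z F := by
    intro z hz
    have h := hconst hz
    simp only [Function.const_apply] at h
    have h2 : MvPolynomial.eval z G / MvPolynomial.eval z F = c := h
    rw [div_eq_iff (hFne z hz)] at h2
    exact h2
  set d : ℂ := c₁ + c₂ * c with hdd
  have hdF : ∀ z ∈ T, 2 * MvPolynomial.eval z ((lam • f + mu • g).map (algebraMap ℝ ℂ))
      = d * MvPolynomial.eval z F := by
    intro z hz
    rw [← hiden z, hGc z hz, hdd]
    ring
  by_cases hdzero : d = 0
  · apply hzero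
    have hCzero : (lam • f + mu • g).map (algebraMap ℝ ℂ) = 0 := by
      apply mv_eq_zero_of_open _ hTopen ⟨z₀, hz₀T⟩
      intro z hz
      have h3 := hdF z hz
      rw [hdzero, zero_mul] at h3
      exact (mul_eq_zero.mp h3).resolve_left two_ne_zero
    have hinj : Function.Injective (algebraMap ℝ ℂ) := (algebraMap ℝ ℂ).injective
    apply MvPolynomial.map_injective (σ := Fin n) (algebraMap ℝ ℂ) hinj
    rw [hCzero, map_zero]
  · have h3 := hdF z₀ hz₀T
    rw [h0, mul_zero] at h3
    exact hFne z₀ hz₀T ((mul_eq_zero.mp h3.symm).resolve_left hdzero)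

end HKOAux

def KStable {n : ℕ} (K : Set (Fin n → ℝ)) (f : MvPolynomial (Fin n) ℂ) : Prop :=
  ∀ z : Fin n → ℂ, (fun j => (z j).im) ∈ interior K → MvPolynomial.eval z f ≠ 0

/-- Conic Hermite–Kakeya–Obreschkoff theorem: `λ f + μ g` is `K`-stable or zero for all
real `λ, μ` iff `f + i g` or `g + i f` is `K`-stable, or `f ≡ g ≡ 0`. -/
theorem stmt10 {n : ℕ} (K : Set (Fin n → ℝ))
    (hKcl : IsClosed K) (hKconv : Convex ℝ K)
    (hKcone : ∀ (c : ℝ), 0 ≤ c → ∀ x ∈ K, c • x ∈ K)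
    (hKpointed : K ∩ (-K) ⊆ {0}) (hKfull : (interior K).Nonempty)
    (f g : MvPolynomial (Fin n) ℝ) :
    (∀ lam mu : ℝ, KStable K ((lam • f + mu • g).map (algebraMap ℝ ℂ)) ∨
        lam • f + mu • g = 0) ↔
      (KStable K (f.map (algebraMap ℝ ℂ) + C Complex.I * g.map (algebraMap ℝ ℂ)) ∨
        KStable K (g.map (algebraMap ℝ ℂ) + C Complex.I * f.map (algebraMap ℝ ℂ)) ∨
        (f = 0 ∧ g = 0)) := by
  constructor
  · -- forward direction
    intro Hpencil
    by_cases hdg : ∀ lam mu : ℝ, lam • f + mu • g = 0 → lam = 0 ∧ mu = 0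
    · -- nondegenerate pencil
      have hstab : ∀ lam mu : ℝ, ¬(lam = 0 ∧ mu = 0) →
          ∀ z : Fin n → ℂ, (fun j => (z j).im) ∈ interior K →
            (lam : ℂ) * MvPolynomial.eval z (f.map (algebraMap ℝ ℂ))
              + (mu : ℂ) * MvPolynomial.eval z (g.map (algebraMap ℝ ℂ)) ≠ 0 := by
        intro lam mu hlm z hz
        rcases Hpencil lam mu with hst | hzero
        · have := hst z hz
          rwa [eval_comb] at this
        · exact absurd (hdg lam mu hzero) hlm
      set fC := f.map (algebraMap ℝ ℂ) with hfC
      set gC := g.map (algebraMap ℝ ℂ) with hgC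
      set T : Set (Fin n → ℂ) := {z | (fun j => (z j).im) ∈ interior K} with hT
      have hb : ∀ z ∈ T, MvPolynomial.eval z gC ≠ 0 := by
        intro z hz hb0
        have := hstab 0 1 (by simp) z hz
        simp [hb0] at this
      -- the sign function
      set s : (Fin n → ℂ) → ℝ :=
        fun z => ((-(MvPolynomial.eval z fC)) * (starRingEnd ℂ) (MvPolynomial.eval z gC)).im
        with hs_def
      have hscont : Continuous s := by
        have h1 : Continuous (fun z : Fin n → ℂ => MvPolynomial.eval z fC) := by
          rw [← continuousOn_univ]
          exact (AnalyticOnNhd.eval_mvPolynomial (𝕜 := ℂ) fC).continuousOn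
        have h2 : Continuous (fun z : Fin n → ℂ => MvPolynomial.eval z gC) := by
          rw [← continuousOn_univ]
          exact (AnalyticOnNhd.eval_mvPolynomial (𝕜 := ℂ) gC).continuousOn
        exact Complex.continuous_im.comp ((h1.neg).mul (Complex.continuous_conj.comp h2))
      have hsne : ∀ z ∈ T, s z ≠ 0 := by
        intro z hz hs0
        set a := MvPolynomial.eval z fC with ha
        set b := MvPolynomial.eval z gC with hbdef
        have hbne : b ≠ 0 := hb z hz
        have him : (a * (starRingEnd ℂ) b).im = 0 := by
          have h : (-(MvPolynomial.eval z fC)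
              * (starRingEnd ℂ) (MvPolynomial.eval z gC)).im = 0 := hs0
          rw [neg_mul, Complex.neg_im, neg_eq_zero] at h
          exact h
        have hreal : a * (starRingEnd ℂ) b = ((a * (starRingEnd ℂ) b).re : ℂ) := by
          apply Complex.ext <;> simp [him]
        set t : ℝ := (a * (starRingEnd ℂ) b).re / Complex.normSq b with ht
        have hab : a = (t : ℂ) * b := by
          have hnsne : (Complex.normSq b : ℂ) ≠ 0 :=
            Complex.ofReal_ne_zero.mpr (ne_of_gt (Complex.normSq_pos.2 hbne))
          have h2 : (starRingEnd ℂ) b * b = (Complex.normSq b : ℂ) := by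
            rw [mul_comm]; exact Complex.mul_conj b
          have h1 : a * (Complex.normSq b : ℂ) = ((a * (starRingEnd ℂ) b).re : ℂ) * b := by
            calc a * (Complex.normSq b : ℂ) = (a * (starRingEnd ℂ) b) * b := by
                  rw [← h2]; ring
              _ = ((a * (starRingEnd ℂ) b).re : ℂ) * b := by rw [← hreal]
          rw [ht, Complex.ofReal_div, div_mul_eq_mul_div, eq_div_iff hnsne]
          linear_combination h1
        apply hstab 1 (-t) (by simp) z hz
        show ((1 : ℝ) : ℂ) * a + (((-t) : ℝ) : ℂ) * b = 0
        push_cast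
        rw [hab]
        ring
      -- connectedness argument
      have hTpre : IsPreconnected T := (tube_convex hKconv).isPreconnected
      have hu : IsOpen {z : Fin n → ℂ | 0 < s z} := isOpen_lt continuous_const hscont
      have hv : IsOpen {z : Fin n → ℂ | s z < 0} := isOpen_lt hscont continuous_const
      have hdisj : Disjoint {z : Fin n → ℂ | 0 < s z} {z : Fin n → ℂ | s z < 0} := by
        rw [Set.disjoint_iff]
        rintro z ⟨h1, h2⟩
        simp only [Set.mem_setOf_eq] at h1 h2
        exact absurd (lt_trans h1 h2) (lt_irrefl (0 : ℝ))
      have hsub : T ⊆ {z : Fin n → ℂ | 0 < s z} ∪ {z : Fin n → ℂ | s z < 0} := by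
        intro z hz
        rcases lt_trichotomy (s z) 0 with h | h | h
        · exact Or.inr h
        · exact absurd h (hsne z hz)
        · exact Or.inl h
      rcases hTpre.subset_or_subset hu hv hdisj hsub with hpos | hneg
      · -- s > 0 on T : g + I f stable
        right; left
        intro z hz h0
        have hzT : z ∈ T := hz
        have h0' : MvPolynomial.eval z gC + Complex.I * MvPolynomial.eval z fC = 0 := by
          simpa using h0
        have hbeq : MvPolynomial.eval z gC = -(Complex.I * MvPolynomial.eval z fC) := by
          linear_combination h0'
        have hsz : s z = -Complex.normSq (MvPolynomial.eval z fC) := by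
          show (-(MvPolynomial.eval z fC)
              * (starRingEnd ℂ) (MvPolynomial.eval z gC)).im = _
          rw [hbeq, map_neg, map_mul, Complex.conj_I]
          set A := MvPolynomial.eval z fC
          have h4 : -A * -(-Complex.I * (starRingEnd ℂ) A)
              = -(Complex.I * (A * (starRingEnd ℂ) A)) := by ring
          rw [h4, Complex.mul_conj]
          simp
        have hgt : 0 < s z := hpos hzT
        rw [hsz] at hgt
        nlinarith [Complex.normSq_nonneg (MvPolynomial.eval z fC)]
      · -- s < 0 on T : f + I g stable
        left
        intro z hz h0
        have hzT : z ∈ T := hz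
        have h0' : MvPolynomial.eval z fC + Complex.I * MvPolynomial.eval z gC = 0 := by
          simpa using h0
        have haeq : MvPolynomial.eval z fC = -(Complex.I * MvPolynomial.eval z gC) := by
          linear_combination h0'
        have hsz : s z = Complex.normSq (MvPolynomial.eval z gC) := by
          show (-(MvPolynomial.eval z fC)
              * (starRingEnd ℂ) (MvPolynomial.eval z gC)).im = _
          rw [haeq]
          set B := MvPolynomial.eval z gC
          have h2 : - -(Complex.I * B) * (starRingEnd ℂ) B
              = Complex.I * (B * (starRingEnd ℂ) B) := by ring
          rw [h2, Complex.mul_conj]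
          simp
        have hlt : s z < 0 := hneg hzT
        rw [hsz] at hlt
        nlinarith [Complex.normSq_nonneg (MvPolynomial.eval z gC)]
    · -- degenerate pencil
      push_neg at hdg
      obtain ⟨lam, mu, hcomb, hlm⟩ := hdg
      by_cases hlam : lam = 0
      · subst hlam
        have hmu : mu ≠ 0 := hlm rfl
        have hg0 : g = 0 := by
          have h1 : mu • g = 0 := by simpa only [zero_smul, zero_add] using hcomb
          have h2 := congrArg (fun p : MvPolynomial (Fin n) ℝ => mu⁻¹ • p) h1
          simpa [smul_smul, inv_mul_cancel₀ hmu] using h2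
        rcases Hpencil 1 0 with hst | hz0
        · left
          intro z hz h0
          apply hst z hz
          rw [eval_comb]
          rw [hg0] at h0 ⊢
          simpa using h0
        · right; right
          constructor
          · have : (1 : ℝ) • f = 0 := by simpa [hg0] using hz0
            simpa using this
          · exact hg0
      · -- lam ≠ 0 : f = c • g
        set c : ℝ := -(mu / lam) with hc
        have hf : f = c • g := by
          have h1 : lam • f = -(mu • g) := by linear_combination (norm := module) hcomb
          have h2 : f = lam⁻¹ • (lam • f) := by
            rw [smul_smul, inv_mul_cancel₀ hlam, one_smul]
          rw [h2, h1, hc]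
          rw [smul_neg, smul_smul]
          rw [← neg_smul]
          congr 1
          field_simp
        rcases Hpencil 0 1 with hst | hz0
        · right; left
          intro z hz h0
          have hgz := hst z hz
          rw [eval_comb] at hgz
          simp only [Complex.ofReal_zero, Complex.ofReal_one, zero_mul, one_mul, zero_add] at hgz
          -- hgz : eval z gC ≠ 0
          have hfg : MvPolynomial.eval z (f.map (algebraMap ℝ ℂ))
              = (c : ℂ) * MvPolynomial.eval z (g.map (algebraMap ℝ ℂ)) := by
            rw [hf, MvPolynomial.smul_eq_C_mul]
            simp [Complex.coe_algebraMap]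
          simp only [MvPolynomial.eval_add, MvPolynomial.eval_mul, MvPolynomial.eval_C] at h0
          rw [hfg] at h0
          have hne : (1 : ℂ) + Complex.I * c ≠ 0 := by
            intro h
            have := congrArg Complex.re h
            simp at this
          apply hgz
          have : ((1 : ℂ) + Complex.I * c) * MvPolynomial.eval z (g.map (algebraMap ℝ ℂ)) = 0 := by
            linear_combination h0
          exact (mul_eq_zero.mp this).resolve_left hne
        · have hg0 : g = 0 := by simpa using hz0
          right; right
          exact ⟨by rw [hf, hg0, smul_zero], hg0⟩
  · -- backward direction
    rintro (hF | hG | ⟨hf0, hg0⟩) lam mu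
    · exact lemmaM hKconv hKcone f g hF lam mu
    · have := lemmaM hKconv hKcone g f hG mu lam
      rcases this with h | h
      · left
        intro z hz
        have := h z hz
        rwa [show mu • g + lam • f = lam • f + mu • g from add_comm _ _] at this
      · right
        rw [← h]
        exact add_comm _ _
    · right
      rw [hf0, hg0]
      simp
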